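/- arXiv:2312.07479 — 2 statements merged into one kernel-verified Lean document; each statement's English description precedes it below -/
import Mathlib

section
/- Fix β > 1, α ≥ 1, κ̄ > 1, and θ̄ ∈ (0,1). The unique minimizer θ̂ of f̄(θ) = θ̄^(β−1)/((β−1)θ^(β−1)) + κ̄θ^α/α − (κ̄−1)log θ satisfies θ̄ < θ̂ < 1. -/
open Set Filter Topology

/-- When `θ̄ ∈ (0,1)`, the minimizer `θ̂` of `f̄` over `(0,∞)` satisfies `θ̄ < θ̂ < 1`. -/
theorem fbar_minimizer_between_thetabar_and_one (β α κ θbar θhat : ℝ)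
    (hβ : 1 < β) (hα : 1 ≤ α) (hκ : 1 < κ) (hθbar0 : 0 < θbar) (hθbar1 : θbar < 1)
    (hθhat : θhat ∈ Set.Ioi (0 : ℝ))
    (hmin : ∀ θ ∈ Set.Ioi (0 : ℝ),
      θbar ^ (β - 1) / ((β - 1) * θhat ^ (β - 1)) + κ * θhat ^ α / α
          - (κ - 1) * Real.log θhat ≤
        θbar ^ (β - 1) / ((β - 1) * θ ^ (β - 1)) + κ * θ ^ α / α
          - (κ - 1) * Real.log θ) :
    θbar < θhat ∧ θhat < 1 := by
  have hβ1 : (0:ℝ) < β - 1 := by linarith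
  have hα0 : (0:ℝ) < α := by linarith
  have hκ0 : (0:ℝ) < κ := by linarith
  set f : ℝ → ℝ := fun θ =>
    θbar ^ (β - 1) / ((β - 1) * θ ^ (β - 1)) + κ * θ ^ α / α - (κ - 1) * Real.log θ with hf
  set g : ℝ → ℝ := fun θ => κ * θ ^ α - (κ - 1) - θbar ^ (β - 1) * θ ^ (1 - β) with hg
  have hθhat0 : 0 < θhat := hθhat
  -- g is strictly monotone on positives
  have hg_mono : ∀ x : ℝ, 0 < x → ∀ y : ℝ, x < y → g x < g y := by
    intro x hx y hxy
    have h1 : x ^ α < y ^ α := Real.rpow_lt_rpow hx.le hxy hα0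
    have h2 : y ^ (1 - β) < x ^ (1 - β) :=
      Real.rpow_lt_rpow_of_neg hx hxy (by linarith)
    have h3 : 0 < θbar ^ (β - 1) := Real.rpow_pos_of_pos hθbar0 _
    simp only [hg]
    nlinarith
  -- g θbar < 0
  have hgθbar : g θbar < 0 := by
    have h1 : θbar ^ (β - 1) * θbar ^ (1 - β) = 1 := by
      rw [← Real.rpow_add hθbar0]; norm_num
    have h2 : θbar ^ α < 1 := Real.rpow_lt_one hθbar0.le hθbar1 hα0
    simp only [hg]
    nlinarith
  -- g 1 > 0
  have hg1 : 0 < g 1 := by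
    have h2 : θbar ^ (β - 1) < 1 := Real.rpow_lt_one hθbar0.le hθbar1 hβ1
    simp only [hg, Real.one_rpow]
    nlinarith
  -- continuity of g at positive points
  have hgcont : ∀ x : ℝ, 0 < x → ContinuousAt g x := by
    intro x hx
    have c1 : ContinuousAt (fun t : ℝ => t ^ α) x :=
      Real.continuousAt_rpow_const x α (Or.inl hx.ne')
    have c2 : ContinuousAt (fun t : ℝ => t ^ (1 - β)) x :=
      Real.continuousAt_rpow_const x (1 - β) (Or.inl hx.ne')
    exact ((c1.const_mul κ).sub continuousAt_const).sub (c2.const_mul _)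
  -- pick c ∈ (θbar, 1) with g c < 0
  obtain ⟨c, hgc, hθbarc, hc1⟩ : ∃ c, g c < 0 ∧ θbar < c ∧ c < 1 := by
    have h1 : ∀ᶠ x in 𝓝[>] θbar, g x < 0 :=
      eventually_nhdsWithin_of_eventually_nhds
        ((hgcont θbar hθbar0).eventually_lt continuousAt_const hgθbar)
    have h2 : ∀ᶠ x in 𝓝[>] θbar, x < 1 :=
      eventually_nhdsWithin_of_eventually_nhds (eventually_lt_nhds hθbar1)
    have h3 : ∀ᶠ x in 𝓝[>] θbar, θbar < x := eventually_mem_nhdsWithin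
    obtain ⟨c, hc⟩ := ((h1.and h2).and h3).exists
    exact ⟨c, hc.1.1, hc.2, hc.1.2⟩
  -- pick d ∈ (0, 1) with g d > 0
  obtain ⟨d, hgd, hd0, hd1⟩ : ∃ d, 0 < g d ∧ 0 < d ∧ d < 1 := by
    have h1 : ∀ᶠ x in 𝓝[<] (1:ℝ), 0 < g x :=
      eventually_nhdsWithin_of_eventually_nhds
        (continuousAt_const.eventually_lt (hgcont 1 one_pos) hg1)
    have h2 : ∀ᶠ x in 𝓝[<] (1:ℝ), (0:ℝ) < x :=
      eventually_nhdsWithin_of_eventually_nhds (eventually_gt_nhds one_pos)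
    have h3 : ∀ᶠ x in 𝓝[<] (1:ℝ), x < 1 := eventually_mem_nhdsWithin
    obtain ⟨d, hd⟩ := ((h1.and h2).and h3).exists
    exact ⟨d, hd.1.1, hd.1.2, hd.2⟩
  have hc0 : 0 < c := lt_trans hθbar0 hθbarc
  -- derivative of f
  have hderiv : ∀ x : ℝ, 0 < x → HasDerivAt f (g x / x) x := by
    intro x hx
    have hxE : (0:ℝ) < x ^ (β - 1) := Real.rpow_pos_of_pos hx _
    have hE : HasDerivAt (fun θ : ℝ => θ ^ (β - 1)) ((β - 1) * x ^ (β - 1 - 1)) x :=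
      Real.hasDerivAt_rpow_const (Or.inl hx.ne')
    have hA : HasDerivAt (fun θ : ℝ => θbar ^ (β - 1) / (β - 1) * (θ ^ (β - 1))⁻¹)
        (θbar ^ (β - 1) / (β - 1) * (-((β - 1) * x ^ (β - 1 - 1)) / (x ^ (β - 1)) ^ 2)) x :=
      (hE.inv hxE.ne').const_mul _
    have hP : HasDerivAt (fun θ : ℝ => κ / α * θ ^ α) (κ / α * (α * x ^ (α - 1))) x :=
      (Real.hasDerivAt_rpow_const (Or.inl hx.ne')).const_mul _
    have hL : HasDerivAt (fun θ : ℝ => (κ - 1) * Real.log θ) ((κ - 1) * x⁻¹) x :=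
      (Real.hasDerivAt_log hx.ne').const_mul _
    have htot := (hA.add hP).sub hL
    have hfun : f = fun θ : ℝ => θbar ^ (β - 1) / (β - 1) * (θ ^ (β - 1))⁻¹
        + κ / α * θ ^ α - (κ - 1) * Real.log θ := by
      funext t
      simp only [hf]
      rw [div_mul_eq_div_div, div_eq_mul_inv, mul_div_right_comm]
    rw [hfun]
    refine htot.congr_deriv ?_
    have e1 : x ^ (β - 1 - 1) = x ^ (β - 1) / x := by
      rw [Real.rpow_sub hx, Real.rpow_one]
    have e2 : x ^ (α - 1) = x ^ α / x := by
      rw [Real.rpow_sub hx, Real.rpow_one]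
    have e3 : x ^ (1 - β) = (x ^ (β - 1))⁻¹ := by
      rw [show (1 - β) = -(β - 1) by ring, Real.rpow_neg hx.le]
    simp only [hg, e1, e2, e3]
    field_simp
    ring
  -- f is strictly antitone on Ioc 0 c
  have hanti : StrictAntiOn f (Ioc 0 c) := by
    apply StrictAntiOn.mono ?_ (le_refl _)
    apply strictAntiOn_of_deriv_neg (convex_Ioc 0 c)
    · intro x hx
      exact ((hderiv x hx.1).continuousAt).continuousWithinAt
    · intro x hx
      rw [interior_Ioc] at hx
      rw [(hderiv x hx.1).deriv]
      have : g x < 0 := lt_trans (hg_mono x hx.1 c hx.2) hgc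
      exact div_neg_of_neg_of_pos this hx.1
  -- f is strictly monotone on Ici d
  have hmono : StrictMonoOn f (Ici d) := by
    apply strictMonoOn_of_deriv_pos (convex_Ici d)
    · intro x hx
      exact ((hderiv x (lt_of_lt_of_le hd0 hx)).continuousAt).continuousWithinAt
    · intro x hx
      rw [interior_Ici] at hx
      have hx0 : 0 < x := lt_trans hd0 hx
      rw [(hderiv x hx0).deriv]
      have : 0 < g x := lt_trans hgd (hg_mono d hd0 x hx)
      exact div_pos this hx0
  constructor
  · -- θbar < θhat : show c ≤ θhat
    rcases lt_or_ge θhat c with hlt | hge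
    · have h1 : f c < f θhat := hanti ⟨hθhat0, hlt.le⟩ ⟨hc0, le_refl c⟩ hlt
      exact absurd (hmin c hc0) (not_le.mpr h1)
    · exact lt_of_lt_of_le hθbarc hge
  · -- θhat < 1 : show θhat ≤ d
    rcases lt_or_ge d θhat with hlt | hle
    · have h1 : f d < f θhat := hmono (le_refl d) hlt.le hlt
      exact absurd (hmin d hd0) (not_le.mpr h1)
    · exact lt_of_le_of_lt hle hd1
end

section
/- Fix β > 1, θ̄ = 1, α ≥ 1, κ̄ > 1, K ≥ 1, and η = (αβ/(K(β−1)κ̄))^(1/α). Then the function f̄(θ) = 1/((β−1)θ^(β−1)) + βθ^α/(K(β−1)η^α) − (κ̄−1)log θ is decreasing on (0,1] and increasing on [1,∞); in particular its minimum over (0,∞) is attained at θ = 1. -/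
/-- In the unperturbed case `θ̄ = 1`, with the optimal scale
`η = (αβ/(K(β−1)κ̄))^(1/α)`, the function `f̄` is decreasing on `(0,1]` and
increasing on `[1,∞)`; in particular its minimum over `(0,∞)` is attained at `θ = 1`. -/
theorem fbar_min_at_one (β α κ K : ℝ)
    (hβ : 1 < β) (hα : 1 ≤ α) (hκ : 1 < κ) (hK : 1 ≤ K) :
    letI η : ℝ := (α * β / (K * (β - 1) * κ)) ^ (1 / α)
    letI f : ℝ → ℝ := fun θ =>
      1 / ((β - 1) * θ ^ (β - 1)) + β * θ ^ α / (K * (β - 1) * η ^ α)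
        - (κ - 1) * Real.log θ
    AntitoneOn f (Set.Ioc (0 : ℝ) 1) ∧ MonotoneOn f (Set.Ici (1 : ℝ)) ∧
      ∀ θ ∈ Set.Ioi (0 : ℝ), f 1 ≤ f θ := by
  set η : ℝ := (α * β / (K * (β - 1) * κ)) ^ (1 / α) with hη
  set f : ℝ → ℝ := fun θ =>
      1 / ((β - 1) * θ ^ (β - 1)) + β * θ ^ α / (K * (β - 1) * η ^ α)
        - (κ - 1) * Real.log θ with hfdef
  have hα0 : (0:ℝ) < α := lt_of_lt_of_le one_pos hα
  have hβ0 : (0:ℝ) < β - 1 := by linarith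
  have hK0 : (0:ℝ) < K := lt_of_lt_of_le one_pos hK
  have hκ0 : (0:ℝ) < κ := lt_trans one_pos hκ
  have hx0 : (0:ℝ) < α * β / (K * (β - 1) * κ) := by positivity
  have hηα : η ^ α = α * β / (K * (β - 1) * κ) := by
    show ((α * β / (K * (β - 1) * κ)) ^ (1 / α)) ^ α = _
    rw [← Real.rpow_mul hx0.le, one_div_mul_cancel hα0.ne', Real.rpow_one]
  set g : ℝ → ℝ := fun θ =>
    (β - 1)⁻¹ * θ ^ (1 - β) + (κ / α) * θ ^ α - (κ - 1) * Real.log θ with hg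
  -- f agrees with g on positive reals
  have hfg : ∀ x : ℝ, 0 < x → f x = g x := by
    intro x hx
    have hx2 : x ^ (1 - β) = (x ^ (β - 1))⁻¹ := by
      rw [show (1:ℝ) - β = -(β - 1) by ring, Real.rpow_neg hx.le]
    have hxb : x ^ (β - 1) ≠ 0 := (Real.rpow_pos_of_pos hx _).ne'
    show 1 / ((β - 1) * x ^ (β - 1)) + β * x ^ α / (K * (β - 1) * η ^ α)
        - (κ - 1) * Real.log x = _
    rw [hηα, hg]
    simp only [hx2]
    field_simp
  -- derivative of g
  have hderiv : ∀ x : ℝ, 0 < x →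
      HasDerivAt g ((κ * x ^ α - x ^ (1 - β) - (κ - 1)) / x) x := by
    intro x hx
    have h1 : HasDerivAt (fun t : ℝ => t ^ (1 - β)) ((1 - β) * x ^ (1 - β - 1)) x :=
      Real.hasDerivAt_rpow_const (Or.inl hx.ne')
    have h2 : HasDerivAt (fun t : ℝ => t ^ α) (α * x ^ (α - 1)) x :=
      Real.hasDerivAt_rpow_const (Or.inl hx.ne')
    have h3 : HasDerivAt Real.log x⁻¹ x := Real.hasDerivAt_log hx.ne'
    have h := ((h1.const_mul ((β - 1)⁻¹)).add (h2.const_mul (κ / α))).sub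
      (h3.const_mul (κ - 1))
    refine h.congr_deriv ?_
    have e1 : x ^ (1 - β - 1) = x ^ (1 - β) / x := by
      rw [Real.rpow_sub hx, Real.rpow_one]
    have e2 : x ^ (α - 1) = x ^ α / x := by
      rw [Real.rpow_sub hx, Real.rpow_one]
    rw [e1, e2]
    field_simp
    ring
  -- sign of the numerator
  have key_le : ∀ x : ℝ, 0 < x → x ≤ 1 → κ * x ^ α - x ^ (1 - β) - (κ - 1) ≤ 0 := by
    intro x hx hx1
    have h1 : x ^ α ≤ 1 := Real.rpow_le_one hx.le hx1 hα0.le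
    have h2 : (1:ℝ) ≤ x ^ (1 - β) :=
      Real.one_le_rpow_of_pos_of_le_one_of_nonpos hx hx1 (by linarith)
    nlinarith
  have key_ge : ∀ x : ℝ, 1 ≤ x → 0 ≤ κ * x ^ α - x ^ (1 - β) - (κ - 1) := by
    intro x hx1
    have h1 : (1:ℝ) ≤ x ^ α := Real.one_le_rpow hx1 hα0.le
    have h2 : x ^ (1 - β) ≤ 1 :=
      Real.rpow_le_one_of_one_le_of_nonpos hx1 (by linarith)
    nlinarith
  -- antitone part for g
  have hganti : AntitoneOn g (Set.Ioc (0:ℝ) 1) := by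
    apply antitoneOn_of_deriv_nonpos (convex_Ioc 0 1)
    · intro x hx
      exact ((hderiv x hx.1).continuousAt).continuousWithinAt
    · rw [interior_Ioc]
      intro x hx
      exact ((hderiv x hx.1).differentiableAt).differentiableWithinAt
    · rw [interior_Ioc]
      intro x hx
      rw [(hderiv x hx.1).deriv]
      exact div_nonpos_iff.mpr (Or.inr ⟨key_le x hx.1 hx.2.le, hx.1.le⟩)
  -- monotone part for g
  have hgmono : MonotoneOn g (Set.Ici (1:ℝ)) := by
    apply monotoneOn_of_deriv_nonneg (convex_Ici 1)
    · intro x hx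
      exact ((hderiv x (lt_of_lt_of_le one_pos hx)).continuousAt).continuousWithinAt
    · rw [interior_Ici]
      intro x hx
      exact ((hderiv x (lt_trans one_pos hx)).differentiableAt).differentiableWithinAt
    · rw [interior_Ici]
      intro x hx
      rw [(hderiv x (lt_trans one_pos hx)).deriv]
      exact div_nonneg (key_ge x (le_of_lt hx)) (le_of_lt (lt_trans one_pos hx))
  have hanti : AntitoneOn f (Set.Ioc (0:ℝ) 1) := by
    intro a ha b hb hab
    rw [hfg a ha.1, hfg b hb.1]
    exact hganti ha hb hab
  have hmono : MonotoneOn f (Set.Ici (1:ℝ)) := by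
    intro a ha b hb hab
    rw [hfg a (lt_of_lt_of_le one_pos ha), hfg b (lt_of_lt_of_le one_pos hb)]
    exact hgmono ha hb hab
  refine ⟨hanti, hmono, ?_⟩
  intro θ hθ
  rcases le_total θ 1 with hθ1 | hθ1
  · exact hanti ⟨hθ, hθ1⟩ ⟨one_pos, le_refl 1⟩ hθ1
  · exact hmono (Set.mem_Ici.mpr le_rfl) (Set.mem_Ici.mpr hθ1) hθ1
end
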